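/- Let v : ℕ → ℝ be weakly increasing, and for a ∈ ℝ let l_a = #{j ∈ ℕ : v_j = a} ∈ ℕ ∪ {∞}. Let u = u_1⋯u_n be a word with letters in the support {v_j : j ∈ ℕ} and let a be a letter of the support; set μ_b(u) = #{m ≤ n : u_m = b} and assume μ_b(u) ≤ l_b for every b. Then P^{(v)}(w_1 = u_1, ..., w_n = u_n, w_{n+1} = a) = P^{(v)}(w_1 = u_1, ..., w_n = u_n) · ( q^{Σ_{b<a} (l_b − μ_b(u))} − q^{Σ_{b≤a} (l_b − μ_b(u))} ), where b runs over the support of v and the convention q^{∞} = 0 is used. -/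

import Mathlib

set_option maxHeartbeats 1000000


open MeasureTheory ProbabilityTheory

/-- The first `j` values `σ(0), …, σ(j-1)` of the infinite `q`-shuffle permutation driven by
the (0-indexed) geometric choices `x`. -/
noncomputable def shufflePrefix (x : ℕ → ℕ) : ℕ → List ℕ
  | 0 => []
  | j + 1 => shufflePrefix x j ++ [Nat.nth (fun m => m ∉ shufflePrefix x j) (x j)]

/-- The random injection `σ : ℕ → ℕ` driving the infinite `q`-shuffle: `σ(j)` is the
`x j`-th smallest (0-indexed) natural number not in `{σ(0), …, σ(j-1)}`. -/
noncomputable def shuffleSeq (x : ℕ → ℕ) (j : ℕ) : ℕ :=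
  Nat.nth (fun m => m ∉ shufflePrefix x j) (x j)

/-- `q ^ k` for an extended-natural exponent `k ∈ ℕ ∪ {∞}`, with the convention `q^∞ = 0`
(valid for `0 < q < 1`). -/
noncomputable def qpowE (q : ℝ) (k : ℕ∞) : ℝ := if k = ⊤ then 0 else q ^ k.toNat

lemma notMem_infinite (L : List ℕ) : {m : ℕ | m ∉ L}.Infinite := by
  have : {m : ℕ | m ∈ L}.Finite := L.finite_toSet
  simpa [Set.compl_setOf] using this.infinite_compl

lemma shufflePrefix_succ (x : ℕ → ℕ) (j : ℕ) :
    shufflePrefix x (j + 1) = shufflePrefix x j ++ [shuffleSeq x j] := rfl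

lemma shufflePrefix_eq_map (x : ℕ → ℕ) (n : ℕ) :
    shufflePrefix x n = (List.range n).map (shuffleSeq x) := by
  induction n with
  | zero => rfl
  | succ n ih => rw [shufflePrefix_succ, ih, List.range_succ, List.map_append]; rfl

lemma mem_shufflePrefix (x : ℕ → ℕ) (n k : ℕ) :
    k ∈ shufflePrefix x n ↔ ∃ i < n, shuffleSeq x i = k := by
  simp [shufflePrefix_eq_map, List.mem_map]

lemma shuffleSeq_notMem (x : ℕ → ℕ) (j : ℕ) : shuffleSeq x j ∉ shufflePrefix x j :=
  Nat.nth_mem_of_infinite (notMem_infinite _) (x j)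

lemma shuffleSeq_injOn (x : ℕ → ℕ) {i j : ℕ} (hij : i < j) :
    shuffleSeq x i ≠ shuffleSeq x j := by
  intro h
  exact shuffleSeq_notMem x j ((mem_shufflePrefix x j _).2 ⟨i, hij, h⟩)

lemma shufflePrefix_congr {x y : ℕ → ℕ} {j : ℕ} (h : ∀ t < j, x t = y t) :
    shufflePrefix x j = shufflePrefix y j := by
  induction j with
  | zero => rfl
  | succ j ih =>
    have h1 : shufflePrefix x j = shufflePrefix y j :=
      ih fun t ht => h t (ht.trans (Nat.lt_succ_self j))
    show shufflePrefix x j ++ _ = shufflePrefix y j ++ _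
    rw [h1, h j (Nat.lt_succ_self j)]

lemma shuffleSeq_congr {x y : ℕ → ℕ} {j : ℕ} (h : ∀ t ≤ j, x t = y t) :
    shuffleSeq x j = shuffleSeq y j := by
  unfold shuffleSeq
  rw [shufflePrefix_congr (fun t ht => h t ht.le), h j le_rfl]

lemma key_count (v : ℕ → ℝ) {n : ℕ} (u : Fin n → ℝ) (Q : ℝ → Prop) [DecidablePred Q]
    (c : ℕ) (hc : ∀ j, Q (v j) ↔ j < c) (x : ℕ → ℕ)
    (hcond : ∀ m : Fin n, v (shuffleSeq x (m : ℕ)) = u m) :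
    Nat.count (fun m => m ∉ shufflePrefix x n) c
      = c - (Finset.univ.filter (fun m : Fin n => Q (u m))).card := by
  have hcard : ((Finset.range c).filter (fun m => m ∈ shufflePrefix x n)).card
      = (Finset.univ.filter (fun m : Fin n => Q (u m))).card := by
    symm
    apply Finset.card_bij (fun (m : Fin n) _ => shuffleSeq x (m : ℕ))
    · intro m hm
      simp only [Finset.mem_filter, Finset.mem_univ, true_and] at hm
      simp only [Finset.mem_filter, Finset.mem_range]
      refine ⟨?_, (mem_shufflePrefix x n _).2 ⟨m, m.isLt, rfl⟩⟩
      rw [← hc, hcond m]; exact hm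
    · intro m₁ _ m₂ _ h
      by_contra hne
      rcases lt_or_gt_of_ne (fun hv : (m₁ : ℕ) = (m₂ : ℕ) => hne (Fin.ext hv)) with hlt | hlt
      · exact shuffleSeq_injOn x hlt h
      · exact shuffleSeq_injOn x hlt h.symm
    · intro k hk
      simp only [Finset.mem_filter, Finset.mem_range] at hk
      obtain ⟨i, hi, hik⟩ := (mem_shufflePrefix x n k).1 hk.2
      refine ⟨⟨i, hi⟩, ?_, hik⟩
      simp only [Finset.mem_filter, Finset.mem_univ, true_and]
      rw [← hcond ⟨i, hi⟩]
      simpa [hik, hc] using hk.1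
  have h2 := Finset.card_filter_add_card_filter_not
    (s := Finset.range c) (p := fun m => m ∈ shufflePrefix x n)
  rw [Nat.count_eq_card_filter_range]
  have h3 : ((Finset.range c).filter (fun m => m ∉ shufflePrefix x n)).card
      = ((Finset.range c).filter (fun m => ¬ m ∈ shufflePrefix x n)).card := rfl
  rw [Finset.card_range] at h2
  omega

lemma key_mem (v : ℕ → ℝ) {n : ℕ} (u : Fin n → ℝ) (Q : ℝ → Prop) [DecidablePred Q]
    (c : ℕ) (hc : ∀ j, Q (v j) ↔ j < c) (x : ℕ → ℕ)
    (hcond : ∀ m : Fin n, v (shuffleSeq x (m : ℕ)) = u m) (i : ℕ) :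
    Q (v (Nat.nth (fun m => m ∉ shufflePrefix x n) i)) ↔
      i < c - (Finset.univ.filter (fun m : Fin n => Q (u m))).card := by
  rw [← key_count v u Q c hc x hcond, hc,
    ← Nat.lt_nth_iff_count_lt (notMem_infinite (shufflePrefix x n))]

lemma sum_geom_range (q : ℝ) (A : ℕ) :
    ∑ i ∈ Finset.range A, (1 - q) * q ^ i = 1 - q ^ A := by
  have h : ∀ i, (1 - q) * q ^ i = q ^ i - q ^ (i + 1) := fun i => by ring
  simp_rw [h]
  rw [Finset.sum_range_sub' (fun i => q ^ i)]
  simp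

lemma meas_preimage_finset {Ω : Type*} [MeasurableSpace Ω] (P : Measure Ω) (f : Ω → ℕ)
    (hf : Measurable f) (s : Finset ℕ) :
    P (f ⁻¹' ↑s) = ∑ i ∈ s, P (f ⁻¹' {i}) := by
  have h1 : (↑s : Set ℕ) = ⋃ i ∈ s, {i} := by ext k; simp
  rw [h1, Set.preimage_iUnion₂, measure_biUnion_finset]
  · intro i _ j _ hij
    exact Set.disjoint_left.2 fun ω h1 h2 => hij ((Set.mem_preimage.1 h1).symm.trans h2)
  · exact fun i _ => hf .of_discrete

lemma meas_geom_Ico {Ω : Type*} [MeasurableSpace Ω] (P : Measure Ω)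
    {q : ℝ} (hq0 : 0 < q) (hq1 : q < 1) (f : Ω → ℕ) (hf : Measurable f)
    (hgeom : ∀ i, P (f ⁻¹' {i}) = ENNReal.ofReal ((1 - q) * q ^ i)) (A B : ℕ) :
    P (f ⁻¹' Set.Ico A B) = ENNReal.ofReal (q ^ A - q ^ B) := by
  rcases le_or_gt A B with hAB | hAB
  · have h1 : (Set.Ico A B : Set ℕ) = ↑(Finset.Ico A B) := by simp
    rw [h1, meas_preimage_finset P f hf, Finset.sum_congr rfl (fun i _ => hgeom i),
      ← ENNReal.ofReal_sum_of_nonneg (fun i _ =>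
        mul_nonneg (by linarith) (pow_nonneg hq0.le i))]
    congr 1
    rw [Finset.sum_Ico_eq_sub _ hAB, sum_geom_range, sum_geom_range]
    ring
  · rw [Set.Ico_eq_empty (by omega), Set.preimage_empty, measure_empty]
    symm
    rw [ENNReal.ofReal_eq_zero, sub_nonpos]
    exact pow_le_pow_of_le_one hq0.le hq1.le hAB.le

lemma meas_geom_Ici {Ω : Type*} [MeasurableSpace Ω] (P : Measure Ω) [IsProbabilityMeasure P]
    {q : ℝ} (hq0 : 0 < q) (hq1 : q < 1) (f : Ω → ℕ) (hf : Measurable f)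
    (hgeom : ∀ i, P (f ⁻¹' {i}) = ENNReal.ofReal ((1 - q) * q ^ i)) (A : ℕ) :
    P (f ⁻¹' Set.Ici A) = ENNReal.ofReal (q ^ A) := by
  have h1 : P (f ⁻¹' Set.Iio A) = ENNReal.ofReal (1 - q ^ A) := by
    have h2 : (Set.Iio A : Set ℕ) = ↑(Finset.range A) := by
      ext i; simp
    rw [h2, meas_preimage_finset P f hf, Finset.sum_congr rfl (fun i _ => hgeom i),
      ← ENNReal.ofReal_sum_of_nonneg (fun i _ =>
        mul_nonneg (by linarith) (pow_nonneg hq0.le i)), sum_geom_range]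
  have hcompl : f ⁻¹' Set.Ici A = (f ⁻¹' Set.Iio A)ᶜ := by
    rw [← Set.preimage_compl, Set.compl_Iio]
  rw [hcompl, measure_compl (hf .of_discrete) (measure_ne_top P _), h1, measure_univ,
    ← ENNReal.ofReal_one, ← ENNReal.ofReal_sub _ (by
      have : q ^ A ≤ 1 := pow_le_one₀ hq0.le hq1.le
      linarith), sub_sub_cancel]

lemma measurable_shuffle {Ω : Type*} [MeasurableSpace Ω] (ξ : ℕ → Ω → ℕ)
    (hmeas : ∀ j, Measurable (ξ j)) (v : ℕ → ℝ) (j : ℕ) :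
    Measurable (fun ω => v (shuffleSeq (fun t => ξ t ω) j)) := by
  have h : (fun ω => v (shuffleSeq (fun t => ξ t ω) j)) =
      (fun y : Fin (j + 1) → ℕ =>
          v (shuffleSeq (fun t => if h : t < j + 1 then y ⟨t, h⟩ else 0) j))
        ∘ (fun ω (i : Fin (j + 1)) => ξ (i : ℕ) ω) := by
    funext ω
    simp only [Function.comp_apply]
    congr 1
    exact shuffleSeq_congr (fun t ht => by rw [dif_pos (Nat.lt_succ_of_le ht)])
  rw [h]
  exact (measurable_of_countable _).comp (measurable_pi_lambda _ fun i => hmeas (i : ℕ))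


noncomputable def padFin (n : ℕ) (t : Fin n → ℕ) (j : ℕ) : ℕ :=
  if h : j < n then t ⟨j, h⟩ else 0

def shuffleCond (v : ℕ → ℝ) {n : ℕ} (u : Fin n → ℝ) (t : Fin n → ℕ) : Prop :=
  ∀ m : Fin n, v (shuffleSeq (padFin n t) (m : ℕ)) = u m

lemma padFin_lt (n : ℕ) (t : Fin n → ℕ) {j : ℕ} (h : j < n) : padFin n t j = t ⟨j, h⟩ :=
  dif_pos h

def cylEvent {Ω : Type*} (ξ : ℕ → Ω → ℕ) (n : ℕ) (t : Fin n → ℕ) : Set Ω :=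
  ⋂ j ∈ Finset.range n, ξ j ⁻¹' {padFin n t j}

lemma mem_cylEvent {Ω : Type*} (ξ : ℕ → Ω → ℕ) (n : ℕ) (t : Fin n → ℕ) (ω : Ω) :
    ω ∈ cylEvent ξ n t ↔ ∀ m : Fin n, ξ (m : ℕ) ω = t m := by
  simp only [cylEvent, Set.mem_iInter, Set.mem_preimage, Set.mem_singleton_iff,
    Finset.mem_range]
  constructor
  · intro h m
    rw [h (m : ℕ) m.isLt, padFin_lt n t m.isLt, Fin.eta]
  · intro h j hj
    rw [padFin_lt n t hj]
    exact h ⟨j, hj⟩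

lemma cylEvent_agree {Ω : Type*} {ξ : ℕ → Ω → ℕ} {n : ℕ} {t : Fin n → ℕ} {ω : Ω}
    (hω : ω ∈ cylEvent ξ n t) {j : ℕ} (hj : j < n) : ξ j ω = padFin n t j := by
  rw [padFin_lt n t hj]
  exact (mem_cylEvent ξ n t ω).1 hω ⟨j, hj⟩

lemma cylEvent_seq {Ω : Type*} {ξ : ℕ → Ω → ℕ} {n : ℕ} {t : Fin n → ℕ} {ω : Ω}
    (hω : ω ∈ cylEvent ξ n t) (m : Fin n) :
    shuffleSeq (fun s => ξ s ω) (m : ℕ) = shuffleSeq (padFin n t) (m : ℕ) :=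
  shuffleSeq_congr fun s hs => cylEvent_agree hω (lt_of_le_of_lt hs m.isLt)

lemma cylEvent_prefix {Ω : Type*} {ξ : ℕ → Ω → ℕ} {n : ℕ} {t : Fin n → ℕ} {ω : Ω}
    (hω : ω ∈ cylEvent ξ n t) :
    shufflePrefix (fun s => ξ s ω) n = shufflePrefix (padFin n t) n :=
  shufflePrefix_congr fun s hs => cylEvent_agree hω hs

lemma decomposition {Ω : Type*} [MeasurableSpace Ω] (P : Measure Ω) [IsProbabilityMeasure P]
    (ξ : ℕ → Ω → ℕ) (hmeas : ∀ j, Measurable (ξ j))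
    (hindep : iIndepFun ξ P)
    (v : ℕ → ℝ) (n : ℕ) (u : Fin n → ℝ) (a : ℝ) (S : Set ℕ)
    (hS : ∀ x : ℕ → ℕ, (∀ m : Fin n, v (shuffleSeq x (m : ℕ)) = u m) →
      ∀ i : ℕ, (v (Nat.nth (fun m => m ∉ shufflePrefix x n) i) = a ↔ i ∈ S)) :
    (P.map (fun ω (j : ℕ) => v (shuffleSeq (fun t => ξ t ω) j)))
        {w : ℕ → ℝ | (∀ m : Fin n, w (m : ℕ) = u m) ∧ w n = a} =
      (P.map (fun ω (j : ℕ) => v (shuffleSeq (fun t => ξ t ω) j)))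
          {w : ℕ → ℝ | ∀ m : Fin n, w (m : ℕ) = u m} * P (ξ n ⁻¹' S) := by
  classical
  have hΦm : Measurable (fun ω (j : ℕ) => v (shuffleSeq (fun t => ξ t ω) j)) :=
    measurable_pi_lambda _ (fun j => measurable_shuffle ξ hmeas v j)
  have hset1 : MeasurableSet {w : ℕ → ℝ | ∀ m : Fin n, w (m : ℕ) = u m} := by
    have h : {w : ℕ → ℝ | ∀ m : Fin n, w (m : ℕ) = u m} =
        ⋂ m : Fin n, (fun w : ℕ → ℝ => w (m : ℕ)) ⁻¹' {u m} := by
      ext w; simp [Set.mem_iInter]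
    rw [h]
    exact MeasurableSet.iInter fun m => (measurable_pi_apply _) (measurableSet_singleton _)
  have hset2 : MeasurableSet {w : ℕ → ℝ | (∀ m : Fin n, w (m : ℕ) = u m) ∧ w n = a} := by
    have h : {w : ℕ → ℝ | (∀ m : Fin n, w (m : ℕ) = u m) ∧ w n = a} =
        {w : ℕ → ℝ | ∀ m : Fin n, w (m : ℕ) = u m} ∩
          ((fun w : ℕ → ℝ => w n) ⁻¹' {a}) := rfl
    rw [h]
    exact hset1.inter ((measurable_pi_apply _) (measurableSet_singleton _))
  rw [Measure.map_apply hΦm hset2, Measure.map_apply hΦm hset1]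
  have hE : (fun ω (j : ℕ) => v (shuffleSeq (fun t => ξ t ω) j)) ⁻¹'
      {w : ℕ → ℝ | ∀ m : Fin n, w (m : ℕ) = u m} =
      ⋃ t : {t : Fin n → ℕ // shuffleCond v u t}, cylEvent ξ n t.1 := by
    ext ω
    simp only [Set.mem_preimage, Set.mem_setOf_eq, Set.mem_iUnion]
    constructor
    · intro h
      have hωA : ω ∈ cylEvent ξ n (fun m => ξ (m : ℕ) ω) :=
        (mem_cylEvent ξ n _ ω).2 fun m => rfl
      have hct : shuffleCond v u (fun m => ξ (m : ℕ) ω) := by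
        intro m
        rw [← cylEvent_seq hωA m]
        exact h m
      exact ⟨⟨_, hct⟩, hωA⟩
    · rintro ⟨⟨t, ht⟩, hω⟩ m
      rw [cylEvent_seq hω m]
      exact ht m
  have hE' : (fun ω (j : ℕ) => v (shuffleSeq (fun t => ξ t ω) j)) ⁻¹'
      {w : ℕ → ℝ | (∀ m : Fin n, w (m : ℕ) = u m) ∧ w n = a} =
      ⋃ t : {t : Fin n → ℕ // shuffleCond v u t}, (cylEvent ξ n t.1 ∩ ξ n ⁻¹' S) := by
    ext ω
    simp only [Set.mem_preimage, Set.mem_setOf_eq, Set.mem_iUnion, Set.mem_inter_iff]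
    constructor
    · rintro ⟨h1, h2⟩
      have hωA : ω ∈ cylEvent ξ n (fun m => ξ (m : ℕ) ω) :=
        (mem_cylEvent ξ n _ ω).2 fun m => rfl
      have hct : shuffleCond v u (fun m => ξ (m : ℕ) ω) := by
        intro m
        rw [← cylEvent_seq hωA m]
        exact h1 m
      refine ⟨⟨_, hct⟩, hωA, ?_⟩
      have h3 : shuffleSeq (fun t => ξ t ω) n =
          Nat.nth (fun m => m ∉ shufflePrefix (padFin n (fun m => ξ (m : ℕ) ω)) n)
            (ξ n ω) := by
        rw [shuffleSeq, cylEvent_prefix hωA]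
      rw [h3] at h2
      exact (hS _ hct (ξ n ω)).1 h2
    · rintro ⟨⟨t, ht⟩, hω, hωS⟩
      have h1 : ∀ m : Fin n, v (shuffleSeq (fun t => ξ t ω) (m : ℕ)) = u m := by
        intro m
        rw [cylEvent_seq hω m]
        exact ht m
      refine ⟨h1, ?_⟩
      have h3 : shuffleSeq (fun t => ξ t ω) n =
          Nat.nth (fun m => m ∉ shufflePrefix (padFin n t) n) (ξ n ω) := by
        rw [shuffleSeq, cylEvent_prefix hω]
      rw [h3]
      exact (hS _ ht (ξ n ω)).2 hωS
  have hAmeas : ∀ t : Fin n → ℕ, MeasurableSet (cylEvent ξ n t) := by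
    intro t
    exact MeasurableSet.biInter (Finset.range n).countable_toSet
      (fun j _ => (hmeas j) (measurableSet_singleton _))
  have hdisj : Pairwise (Function.onFun Disjoint
      fun t : {t : Fin n → ℕ // shuffleCond v u t} => cylEvent ξ n t.1) := by
    intro t₁ t₂ hne
    refine Set.disjoint_left.2 fun ω h1 h2 => hne ?_
    apply Subtype.ext
    funext m
    rw [← (mem_cylEvent ξ n t₁.1 ω).1 h1 m, (mem_cylEvent ξ n t₂.1 ω).1 h2 m]
  have hdisj' : Pairwise (Function.onFun Disjoint
      fun t : {t : Fin n → ℕ // shuffleCond v u t} => cylEvent ξ n t.1 ∩ ξ n ⁻¹' S) := by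
    intro t₁ t₂ hne
    exact Set.disjoint_of_subset Set.inter_subset_left Set.inter_subset_left (hdisj hne)
  have hprod : ∀ t : Fin n → ℕ,
      P (cylEvent ξ n t ∩ ξ n ⁻¹' S) = P (cylEvent ξ n t) * P (ξ n ⁻¹' S) := by
    intro t
    have hnr : n ∉ Finset.range n := by simp
    have h1 := hindep.measure_inter_preimage_eq_mul (Finset.range (n + 1))
      (sets := fun j => if j = n then S else {padFin n t j}) (fun i _ => .of_discrete)
    have h2 := hindep.measure_inter_preimage_eq_mul (Finset.range n)
      (sets := fun j => ({padFin n t j} : Set ℕ)) (fun i _ => .of_discrete)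
    rw [Finset.range_add_one, Finset.set_biInter_insert, Finset.prod_insert hnr] at h1
    simp only [eq_self_iff_true, if_true] at h1 h2
    have hcg : ∀ j ∈ Finset.range n,
        (ξ j ⁻¹' if j = n then S else {padFin n t j}) = ξ j ⁻¹' {padFin n t j} := by
      intro j hj
      rw [if_neg (by simp only [Finset.mem_range] at hj; omega)]
    have hcg2 : (⋂ j ∈ Finset.range n, ξ j ⁻¹' if j = n then S else {padFin n t j})
        = cylEvent ξ n t := Set.iInter₂_congr hcg
    have hcg3 : (∏ j ∈ Finset.range n, P (ξ j ⁻¹' if j = n then S else {padFin n t j}))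
        = ∏ j ∈ Finset.range n, P (ξ j ⁻¹' {padFin n t j}) :=
      Finset.prod_congr rfl (fun j hj => by rw [hcg j hj])
    rw [hcg2, hcg3, ← h2, Set.inter_comm] at h1
    rw [h1]
    exact mul_comm _ _
  rw [hE, hE', measure_iUnion hdisj' (fun t => (hAmeas t.1).inter ((hmeas n) .of_discrete)),
    measure_iUnion hdisj (fun t => hAmeas t.1)]
  simp_rw [hprod]
  rw [ENNReal.tsum_mul_right]

lemma qpowE_coe (q : ℝ) (k : ℕ) : qpowE q (k : ℕ∞) = q ^ k := by
  rw [qpowE, if_neg (ENat.coe_ne_top k), ENat.toNat_coe]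

/-- transition probabilities of the law `P^{(v)}` of the infinite `q`-shuffle
of a weakly increasing word `v`:
`P^{(v)}(w_1 = u_1, …, w_n = u_n, w_{n+1} = a)
  = P^{(v)}(w_1 = u_1, …, w_n = u_n) · (q^{Σ_{b<a}(l_b - μ_b(u))} - q^{Σ_{b≤a}(l_b - μ_b(u))})`,
where `l_b = #{j : v_j = b}`, `μ_b(u) = #{m : u_m = b}` (so that, with `b` running over the
support of `v`, `Σ_{b<a}(l_b - μ_b(u)) = #{j : v_j < a} - #{m : u_m < a}` and similarly for
`≤`), with the convention `q^∞ = 0`. -/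
theorem stmt_19 (q : ℝ) (hq0 : 0 < q) (hq1 : q < 1)
    (Ω : Type*) [MeasurableSpace Ω] (P : Measure Ω) [IsProbabilityMeasure P]
    (ξ : ℕ → Ω → ℕ) (hmeas : ∀ j, Measurable (ξ j))
    (hindep : iIndepFun ξ P)
    (hgeom : ∀ j i : ℕ, P {ω | ξ j ω = i} = ENNReal.ofReal ((1 - q) * q ^ i))
    (v : ℕ → ℝ) (hv : Monotone v)
    (n : ℕ) (u : Fin n → ℝ) (hu : ∀ m : Fin n, u m ∈ Set.range v) (a : ℝ)
    (ha : a ∈ Set.range v)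
    (hμl : ∀ b : ℝ, ((Finset.univ.filter (fun m : Fin n => u m = b)).card : ℕ∞) ≤
      {j : ℕ | v j = b}.encard) :
    (P.map (fun ω (j : ℕ) => v (shuffleSeq (fun t => ξ t ω) j)))
        {w : ℕ → ℝ | (∀ m : Fin n, w (m : ℕ) = u m) ∧ w n = a} =
      (P.map (fun ω (j : ℕ) => v (shuffleSeq (fun t => ξ t ω) j)))
          {w : ℕ → ℝ | ∀ m : Fin n, w (m : ℕ) = u m} *
        ENNReal.ofReal
          (qpowE q ({j : ℕ | v j < a}.encard -
              ((Finset.univ.filter (fun m : Fin n => u m < a)).card : ℕ∞)) -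
            qpowE q ({j : ℕ | v j ≤ a}.encard -
              ((Finset.univ.filter (fun m : Fin n => u m ≤ a)).card : ℕ∞))) := by
  obtain ⟨j₀, hj₀⟩ := ha
  have hne : {j : ℕ | a ≤ v j}.Nonempty := ⟨j₀, le_of_eq hj₀.symm⟩
  set c := sInf {j : ℕ | a ≤ v j} with hcdef
  have hcmem : a ≤ v c := Nat.sInf_mem hne
  have hc : ∀ j, v j < a ↔ j < c := by
    intro j
    constructor
    · intro h
      by_contra hj
      push_neg at hj
      exact absurd (hcmem.trans (hv hj)) (not_le.2 h)
    · intro hj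
      by_contra h
      push_neg at h
      exact absurd (Nat.sInf_le h) (not_le.2 hj)
  have hclt : {j : ℕ | v j < a}.encard =
      ((c : ℕ∞)) := by
    have h : {j : ℕ | v j < a} = ↑(Finset.range c) := by
      ext j; simp [hc j]
    rw [h, Set.encard_coe_eq_coe_finsetCard, Finset.card_range]
  set μlt := (Finset.univ.filter (fun m : Fin n => u m < a)).card with hμlt
  set μle := (Finset.univ.filter (fun m : Fin n => u m ≤ a)).card with hμle
  have hgeom' : ∀ i : ℕ, P (ξ n ⁻¹' {i}) = ENNReal.ofReal ((1 - q) * q ^ i) :=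
    fun i => hgeom n i
  by_cases hfin : ∃ j, a < v j
  · obtain ⟨j₁, hj₁⟩ := hfin
    have hne2 : {j : ℕ | a < v j}.Nonempty := ⟨j₁, hj₁⟩
    set d := sInf {j : ℕ | a < v j} with hddef
    have hdmem : a < v d := Nat.sInf_mem hne2
    have hd : ∀ j, v j ≤ a ↔ j < d := by
      intro j
      constructor
      · intro h
        by_contra hj
        push_neg at hj
        exact absurd (hdmem.trans_le (hv hj)) (not_lt.2 h)
      · intro hj
        by_contra h
        push_neg at h
        exact absurd (Nat.sInf_le h) (not_le.2 hj)
    have hdle : {j : ℕ | v j ≤ a}.encard = ((d : ℕ∞)) := by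
      have h : {j : ℕ | v j ≤ a} = ↑(Finset.range d) := by
        ext j; simp [hd j]
      rw [h, Set.encard_coe_eq_coe_finsetCard, Finset.card_range]
    have hS : ∀ x : ℕ → ℕ, (∀ m : Fin n, v (shuffleSeq x (m : ℕ)) = u m) →
        ∀ i : ℕ, (v (Nat.nth (fun m => m ∉ shufflePrefix x n) i) = a ↔
          i ∈ Set.Ico (c - μlt) (d - μle)) := by
      intro x hcond i
      have h1 := key_mem v u (fun b => b < a) c hc x hcond i
      have h2 := key_mem v u (fun b => b ≤ a) d hd x hcond i
      simp only [Set.mem_Ico]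
      constructor
      · intro h
        refine ⟨?_, h2.1 (le_of_eq h)⟩
        by_contra hlt
        push_neg at hlt
        have := h1.2 hlt
        rw [h] at this
        exact lt_irrefl a this
      · rintro ⟨hA, hB⟩
        have hle' : v (Nat.nth (fun m => m ∉ shufflePrefix x n) i) ≤ a := h2.2 hB
        have hnlt : ¬ v (Nat.nth (fun m => m ∉ shufflePrefix x n) i) < a :=
          fun hcon => absurd (h1.1 hcon) (not_lt.2 hA)
        exact le_antisymm hle' (not_lt.1 hnlt)
    rw [decomposition P ξ hmeas hindep v n u a _ hS]
    congr 1
    rw [meas_geom_Ico P hq0 hq1 (ξ n) (hmeas n) hgeom' (c - μlt) (d - μle)]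
    congr 1
    rw [hclt, hdle, ← ENat.coe_sub, ← ENat.coe_sub, qpowE_coe, qpowE_coe]
  · push_neg at hfin
    have hS : ∀ x : ℕ → ℕ, (∀ m : Fin n, v (shuffleSeq x (m : ℕ)) = u m) →
        ∀ i : ℕ, (v (Nat.nth (fun m => m ∉ shufflePrefix x n) i) = a ↔
          i ∈ Set.Ici (c - μlt)) := by
      intro x hcond i
      have h1 := key_mem v u (fun b => b < a) c hc x hcond i
      simp only [Set.mem_Ici]
      constructor
      · intro h
        by_contra hlt
        push_neg at hlt
        have := h1.2 hlt
        rw [h] at this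
        exact lt_irrefl a this
      · intro hA
        have hnlt : ¬ v (Nat.nth (fun m => m ∉ shufflePrefix x n) i) < a :=
          fun hcon => absurd (h1.1 hcon) (not_lt.2 hA)
        exact le_antisymm (hfin _) (not_lt.1 hnlt)
    rw [decomposition P ξ hmeas hindep v n u a _ hS]
    congr 1
    rw [meas_geom_Ici P hq0 hq1 (ξ n) (hmeas n) hgeom' (c - μlt)]
    have hle : {j : ℕ | v j ≤ a}.encard = ⊤ := by
      have h : {j : ℕ | v j ≤ a} = Set.univ := by
        ext j; simp [hfin j]
      rw [h]
      exact Set.infinite_univ.encard_eq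
    rw [hle, hclt, ← ENat.coe_sub, qpowE_coe, ENat.top_sub_coe]
    rw [show qpowE q ⊤ = 0 from if_pos rfl, sub_zero]
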